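/- Let δ > 0 and h₁, h₂ ∈ K, and set Ψ_{hᵢ}(x) = 1 + δ·hᵢ(x) and C_{hᵢ} = (∫₀^∞ (1/Ψ_{hᵢ}(η))·exp(−2∫₀^η ξ/Ψ_{hᵢ}(ξ) dξ) dη)^{−1}. Then |C_{h₁} − C_{h₂}| ≤ (1/√π) · δ · √(1+δ) · (1+δ)² · (3+δ) · ‖h₁ − h₂‖_∞. -/

import Mathlib

open Real MeasureTheory Filter

/-- `Ψ_h(x) = 1 + δ·h(x)`. -/
noncomputable def Psi (δ : ℝ) (h : ℝ → ℝ) (x : ℝ) : ℝ := 1 + δ * h x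

/-- The integrand `(1/Ψ_h(η)) · exp(−2∫₀^η ξ/Ψ_h(ξ) dξ)`. -/
noncomputable def F (δ : ℝ) (h : ℝ → ℝ) (η : ℝ) : ℝ :=
  (1 / Psi δ h η) * Real.exp (-2 * ∫ ξ in (0:ℝ)..η, ξ / Psi δ h ξ)

/-- The full integral `∫₀^∞ (1/Ψ_h(η)) · exp(−2∫₀^η ξ/Ψ_h(ξ) dξ) dη`. -/
noncomputable def Itot (δ : ℝ) (h : ℝ → ℝ) : ℝ := ∫ η in Set.Ioi (0:ℝ), F δ h η

/-- The constant `C_h`. -/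
noncomputable def Ch (δ : ℝ) (h : ℝ → ℝ) : ℝ := (Itot δ h)⁻¹

/-- Membership in the set `K`: analytic on `[0,∞)`, `0 ≤ h ≤ 1` there,
`h(0) = 0` and `h(x) → 1` as `x → ∞`. -/
def MemK (h : ℝ → ℝ) : Prop :=
  AnalyticOnNhd ℝ h (Set.Ici 0) ∧ (∀ x ≥ 0, 0 ≤ h x ∧ h x ≤ 1) ∧ h 0 = 0 ∧
    Tendsto h atTop (nhds 1)

/-- Supremum norm over `[0,∞)`. -/
noncomputable def supNorm (f : ℝ → ℝ) : ℝ := ⨆ x : Set.Ici (0:ℝ), |f (x : ℝ)|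

open Set

section Aux
variable {δ : ℝ} {h : ℝ → ℝ}

lemma Psi_ge_one (hδ : 0 < δ) (hK : MemK h) {x : ℝ} (hx : 0 ≤ x) : 1 ≤ Psi δ h x := by
  have := (hK.2.1 x hx).1; unfold Psi; nlinarith

lemma Psi_le (hδ : 0 < δ) (hK : MemK h) {x : ℝ} (hx : 0 ≤ x) : Psi δ h x ≤ 1 + δ := by
  have := (hK.2.1 x hx).2; unfold Psi; nlinarith

lemma Psi_pos (hδ : 0 < δ) (hK : MemK h) {x : ℝ} (hx : 0 ≤ x) : 0 < Psi δ h x :=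
  lt_of_lt_of_le one_pos (Psi_ge_one hδ hK hx)

lemma contPsi (hK : MemK h) : ContinuousOn (Psi δ h) (Set.Ici 0) := by
  unfold Psi
  exact continuousOn_const.add (continuousOn_const.mul hK.1.continuousOn)

lemma contInt (hδ : 0 < δ) (hK : MemK h) :
    ContinuousOn (fun ξ => ξ / Psi δ h ξ) (Set.Ici 0) :=
  continuousOn_id.div (contPsi hK) (fun x hx => (Psi_pos hδ hK hx).ne')

lemma intInt (hδ : 0 < δ) (hK : MemK h) {a b : ℝ} (ha : 0 ≤ a) (hab : a ≤ b) :
    IntervalIntegrable (fun ξ => ξ / Psi δ h ξ) volume a b := by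
  apply ContinuousOn.intervalIntegrable
  apply (contInt hδ hK).mono
  rw [uIcc_of_le hab]
  exact fun x hx => le_trans ha hx.1

lemma A_lb (hδ : 0 < δ) (hK : MemK h) {η : ℝ} (hη : 0 ≤ η) :
    1 / (1 + δ) * η ^ 2 ≤ 2 * ∫ ξ in (0:ℝ)..η, ξ / Psi δ h ξ := by
  have hmono : ∫ ξ in (0:ℝ)..η, ξ / (1 + δ) ≤ ∫ ξ in (0:ℝ)..η, ξ / Psi δ h ξ := by
    apply intervalIntegral.integral_mono_on hη
      (by apply ContinuousOn.intervalIntegrable; fun_prop) (intInt hδ hK le_rfl hη)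
    intro x hx
    exact div_le_div_of_nonneg_left hx.1 (Psi_pos hδ hK hx.1) (Psi_le hδ hK hx.1)
  have hval : ∫ ξ in (0:ℝ)..η, ξ / (1 + δ) = η ^ 2 / 2 / (1 + δ) := by
    rw [intervalIntegral.integral_div, integral_id]; ring
  rw [hval] at hmono
  have h2 : 1 / (1 + δ) * η ^ 2 = 2 * (η ^ 2 / 2 / (1 + δ)) := by ring
  linarith

lemma A_ub (hδ : 0 < δ) (hK : MemK h) {η : ℝ} (hη : 0 ≤ η) :
    2 * ∫ ξ in (0:ℝ)..η, ξ / Psi δ h ξ ≤ η ^ 2 := by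
  have hmono : ∫ ξ in (0:ℝ)..η, ξ / Psi δ h ξ ≤ ∫ ξ in (0:ℝ)..η, ξ := by
    apply intervalIntegral.integral_mono_on hη (intInt hδ hK le_rfl hη)
      (by apply ContinuousOn.intervalIntegrable; fun_prop)
    intro x hx
    exact div_le_self hx.1 (Psi_ge_one hδ hK hx.1)
  rw [integral_id] at hmono
  linarith

lemma A_mono (hδ : 0 < δ) (hK : MemK h) :
    MonotoneOn (fun η => ∫ ξ in (0:ℝ)..η, ξ / Psi δ h ξ) (Set.Ici 0) := by
  intro a ha b hb hab
  simp only
  rw [← intervalIntegral.integral_add_adjacent_intervals (intInt hδ hK le_rfl ha)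
    (intInt hδ hK ha hab)]
  apply le_add_of_nonneg_right
  apply intervalIntegral.integral_nonneg hab
  intro x hx
  have hx0 : 0 ≤ x := le_trans ha hx.1
  exact div_nonneg hx0 (Psi_pos hδ hK hx0).le

lemma measF (hδ : 0 < δ) (hK : MemK h) :
    AEStronglyMeasurable (F δ h) (volume.restrict (Set.Ioi 0)) := by
  have hA : AEMeasurable (fun η => ∫ ξ in (0:ℝ)..η, ξ / Psi δ h ξ)
      (volume.restrict (Set.Ioi 0)) :=
    aemeasurable_restrict_of_monotoneOn measurableSet_Ioi
      ((A_mono hδ hK).mono Ioi_subset_Ici_self)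
  have hΨ : AEMeasurable (Psi δ h) (volume.restrict (Set.Ioi 0)) :=
    ((contPsi hK).mono Ioi_subset_Ici_self).aemeasurable measurableSet_Ioi
  exact ((aemeasurable_const.div hΨ).mul
    (Real.measurable_exp.comp_aemeasurable (hA.const_mul (-2)))).aestronglyMeasurable

lemma F_nonneg (hδ : 0 < δ) (hK : MemK h) {η : ℝ} (hη : 0 ≤ η) : 0 ≤ F δ h η :=
  mul_nonneg (div_nonneg one_pos.le (Psi_pos hδ hK hη).le) (Real.exp_pos _).le

lemma F_le (hδ : 0 < δ) (hK : MemK h) {η : ℝ} (hη : 0 ≤ η) :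
    F δ h η ≤ Real.exp (-(1 / (1 + δ)) * η ^ 2) := by
  unfold F
  have h1 : 1 / Psi δ h η ≤ 1 := by
    rw [div_le_one (Psi_pos hδ hK hη)]; exact Psi_ge_one hδ hK hη
  have h2 : Real.exp (-2 * ∫ ξ in (0:ℝ)..η, ξ / Psi δ h ξ) ≤
      Real.exp (-(1 / (1 + δ)) * η ^ 2) := by
    apply Real.exp_le_exp.2
    have := A_lb hδ hK (h := h) hη
    linarith
  calc (1 / Psi δ h η) * Real.exp (-2 * ∫ ξ in (0:ℝ)..η, ξ / Psi δ h ξ)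
      ≤ 1 * Real.exp (-(1 / (1 + δ)) * η ^ 2) :=
        mul_le_mul h1 h2 (Real.exp_pos _).le one_pos.le
  _ = _ := one_mul _

lemma F_ge (hδ : 0 < δ) (hK : MemK h) {η : ℝ} (hη : 0 ≤ η) :
    1 / (1 + δ) * Real.exp (-1 * η ^ 2) ≤ F δ h η := by
  unfold F
  have h1δ : (0:ℝ) < 1 + δ := by linarith
  have h1 : 1 / (1 + δ) ≤ 1 / Psi δ h η :=
    div_le_div_of_nonneg_left one_pos.le (Psi_pos hδ hK hη) (Psi_le hδ hK hη)
  have h2 : Real.exp (-1 * η ^ 2) ≤ Real.exp (-2 * ∫ ξ in (0:ℝ)..η, ξ / Psi δ h ξ) := by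
    apply Real.exp_le_exp.2
    have := A_ub hδ hK (h := h) hη
    linarith
  exact mul_le_mul h1 h2 (Real.exp_pos _).le (div_nonneg one_pos.le (Psi_pos hδ hK hη).le)

lemma F_integrable (hδ : 0 < δ) (hK : MemK h) : IntegrableOn (F δ h) (Set.Ioi 0) := by
  have hb : (0:ℝ) < 1 / (1 + δ) := by positivity
  apply Integrable.mono' ((integrable_exp_neg_mul_sq hb).integrableOn) (measF hδ hK)
  filter_upwards [ae_restrict_mem measurableSet_Ioi] with x hx
  rw [Real.norm_eq_abs, abs_of_nonneg (F_nonneg hδ hK (le_of_lt hx))]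
  exact F_le hδ hK (le_of_lt hx)

lemma Itot_ge (hδ : 0 < δ) (hK : MemK h) :
    Real.sqrt π / (2 * (1 + δ)) ≤ Itot δ h := by
  have h1δ : (0:ℝ) < 1 + δ := by linarith
  have hlow : ∫ x in Set.Ioi (0:ℝ), 1 / (1 + δ) * Real.exp (-1 * x ^ 2) ≤ Itot δ h := by
    apply setIntegral_mono_on
      (((integrable_exp_neg_mul_sq one_pos).integrableOn).const_mul _)
      (F_integrable hδ hK) measurableSet_Ioi
    exact fun x hx => F_ge hδ hK (le_of_lt hx)
  rw [integral_const_mul, integral_gaussian_Ioi, div_one] at hlow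
  have h2 : Real.sqrt π / (2 * (1 + δ)) = 1 / (1 + δ) * (Real.sqrt π / 2) := by
    field_simp
  linarith

end Aux

lemma abs_exp_neg_sub {a b c : ℝ} (ha : c ≤ a) (hb : c ≤ b) :
    |Real.exp (-a) - Real.exp (-b)| ≤ Real.exp (-c) * |a - b| := by
  wlog hab : b ≤ a generalizing a b
  · rw [abs_sub_comm, abs_sub_comm a b]
    exact this hb ha (le_of_not_ge hab)
  have h1 : Real.exp (-a) ≤ Real.exp (-b) := Real.exp_le_exp.2 (by linarith)
  have h2 : Real.exp (-b) ≤ Real.exp (-c) := Real.exp_le_exp.2 (by linarith)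
  rw [abs_of_nonpos (by linarith), abs_of_nonneg (by linarith)]
  have h3 : Real.exp (-a) = Real.exp (-b) * Real.exp (b - a) := by
    rw [← Real.exp_add]; ring_nf
  have h4 : (b - a) + 1 ≤ Real.exp (b - a) := Real.add_one_le_exp _
  nlinarith [Real.exp_pos (-b)]

section Diff
variable {δ : ℝ} {h₁ h₂ : ℝ → ℝ} {M : ℝ}

lemma recip_diff (hδ : 0 < δ) (hK₁ : MemK h₁) (hK₂ : MemK h₂)
    (hM : ∀ x ≥ 0, |h₁ x - h₂ x| ≤ M) {x : ℝ} (hx : 0 ≤ x) :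
    |1 / Psi δ h₁ x - 1 / Psi δ h₂ x| ≤ δ * M := by
  have p1 := Psi_pos hδ hK₁ hx
  have p2 := Psi_pos hδ hK₂ hx
  have g1 := Psi_ge_one hδ hK₁ hx
  have g2 := Psi_ge_one hδ hK₂ hx
  have key : 1 / Psi δ h₁ x - 1 / Psi δ h₂ x
      = (Psi δ h₂ x - Psi δ h₁ x) / (Psi δ h₁ x * Psi δ h₂ x) := by
    field_simp
  rw [key, abs_div]
  have hnum : |Psi δ h₂ x - Psi δ h₁ x| ≤ δ * M := by
    have : Psi δ h₂ x - Psi δ h₁ x = δ * (h₂ x - h₁ x) := by unfold Psi; ring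
    rw [this, abs_mul, abs_of_pos hδ, abs_sub_comm]
    exact mul_le_mul_of_nonneg_left (hM x hx) hδ.le
  have hden : 1 ≤ |Psi δ h₁ x * Psi δ h₂ x| := by
    rw [abs_of_pos (mul_pos p1 p2)]; nlinarith
  calc |Psi δ h₂ x - Psi δ h₁ x| / |Psi δ h₁ x * Psi δ h₂ x|
      ≤ |Psi δ h₂ x - Psi δ h₁ x| := div_le_self (abs_nonneg _) hden
  _ ≤ δ * M := hnum

lemma A_diff (hδ : 0 < δ) (hK₁ : MemK h₁) (hK₂ : MemK h₂)
    (hM : ∀ x ≥ 0, |h₁ x - h₂ x| ≤ M) (hM0 : 0 ≤ M) {η : ℝ} (hη : 0 ≤ η) :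
    |(∫ ξ in (0:ℝ)..η, ξ / Psi δ h₁ ξ) - ∫ ξ in (0:ℝ)..η, ξ / Psi δ h₂ ξ|
      ≤ δ * M * η ^ 2 / 2 := by
  rw [← intervalIntegral.integral_sub (intInt hδ hK₁ le_rfl hη) (intInt hδ hK₂ le_rfl hη)]
  have hbound : ‖∫ ξ in (0:ℝ)..η, (ξ / Psi δ h₁ ξ - ξ / Psi δ h₂ ξ)‖
      ≤ |∫ ξ in (0:ℝ)..η, δ * M * ξ| := by
    apply intervalIntegral.norm_integral_le_abs_of_norm_le
    · filter_upwards [ae_restrict_mem measurableSet_uIoc] with t ht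
      rw [uIoc_of_le hη] at ht
      have ht0 : 0 ≤ t := ht.1.le
      have key : t / Psi δ h₁ t - t / Psi δ h₂ t
          = t * (1 / Psi δ h₁ t - 1 / Psi δ h₂ t) := by
        rw [mul_sub, mul_one_div, mul_one_div]
      rw [Real.norm_eq_abs, key, abs_mul, abs_of_nonneg ht0]
      calc t * |1 / Psi δ h₁ t - 1 / Psi δ h₂ t| ≤ t * (δ * M) :=
        mul_le_mul_of_nonneg_left (recip_diff hδ hK₁ hK₂ hM ht0) ht0
      _ = δ * M * t := by ring
    · apply Continuous.intervalIntegrable; fun_prop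
  rw [Real.norm_eq_abs] at hbound
  have hval : ∫ ξ in (0:ℝ)..η, δ * M * ξ = δ * M * (η ^ 2 / 2) := by
    rw [intervalIntegral.integral_const_mul, integral_id]; ring
  have hnn : (0:ℝ) ≤ δ * M * (η ^ 2 / 2) := by
    apply mul_nonneg (mul_nonneg hδ.le hM0); positivity
  rw [hval, abs_of_nonneg hnn] at hbound
  calc |∫ ξ in (0:ℝ)..η, (ξ / Psi δ h₁ ξ - ξ / Psi δ h₂ ξ)| ≤ δ * M * (η ^ 2 / 2) := hbound
  _ = δ * M * η ^ 2 / 2 := by ring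

lemma F_diff_le (hδ : 0 < δ) (hK₁ : MemK h₁) (hK₂ : MemK h₂)
    (hM : ∀ x ≥ 0, |h₁ x - h₂ x| ≤ M) (hM0 : 0 ≤ M) {η : ℝ} (hη : 0 ≤ η) :
    |F δ h₁ η - F δ h₂ η| ≤ δ * M * ((1 + η ^ 2) * Real.exp (-(1 / (1 + δ)) * η ^ 2)) := by
  set A₁ := ∫ ξ in (0:ℝ)..η, ξ / Psi δ h₁ ξ with hA₁
  set A₂ := ∫ ξ in (0:ℝ)..η, ξ / Psi δ h₂ ξ with hA₂
  have p2 := Psi_pos hδ hK₂ hη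
  have g2 := Psi_ge_one hδ hK₂ hη
  have hc1 : (1 / (1 + δ)) * η ^ 2 ≤ 2 * A₁ := A_lb hδ hK₁ hη
  have hc2 : (1 / (1 + δ)) * η ^ 2 ≤ 2 * A₂ := A_lb hδ hK₂ hη
  have decomp : F δ h₁ η - F δ h₂ η
      = (1 / Psi δ h₁ η - 1 / Psi δ h₂ η) * Real.exp (-2 * A₁)
        + (1 / Psi δ h₂ η) * (Real.exp (-2 * A₁) - Real.exp (-2 * A₂)) := by
    unfold F; rw [← hA₁, ← hA₂]; ring
  have e1 : Real.exp (-2 * A₁) ≤ Real.exp (-(1 / (1 + δ)) * η ^ 2) :=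
    Real.exp_le_exp.2 (by linarith)
  have hexp : |Real.exp (-2 * A₁) - Real.exp (-2 * A₂)|
      ≤ Real.exp (-(1 / (1 + δ)) * η ^ 2) * (δ * M * η ^ 2) := by
    have := abs_exp_neg_sub (a := 2 * A₁) (b := 2 * A₂) (c := (1 / (1 + δ)) * η ^ 2) hc1 hc2
    simp only [neg_mul] at this ⊢
    apply le_trans this
    apply mul_le_mul_of_nonneg_left _ (Real.exp_pos _).le
    have h2 : |2 * A₁ - 2 * A₂| = 2 * |A₁ - A₂| := by
      rw [show 2 * A₁ - 2 * A₂ = 2 * (A₁ - A₂) by ring, abs_mul, abs_two]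
    rw [h2]
    have := A_diff hδ hK₁ hK₂ hM hM0 hη
    linarith
  calc |F δ h₁ η - F δ h₂ η|
      ≤ |1 / Psi δ h₁ η - 1 / Psi δ h₂ η| * Real.exp (-2 * A₁)
        + (1 / Psi δ h₂ η) * |Real.exp (-2 * A₁) - Real.exp (-2 * A₂)| := by
        rw [decomp]
        refine le_trans (abs_add_le _ _) ?_
        rw [abs_mul, abs_mul, abs_of_nonneg (Real.exp_pos _).le,
          abs_of_nonneg (by positivity : (0:ℝ) ≤ 1 / Psi δ h₂ η)]
  _ ≤ (δ * M) * Real.exp (-(1 / (1 + δ)) * η ^ 2)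
        + 1 * (Real.exp (-(1 / (1 + δ)) * η ^ 2) * (δ * M * η ^ 2)) := by
        apply add_le_add
        · exact mul_le_mul (recip_diff hδ hK₁ hK₂ hM hη) e1 (Real.exp_pos _).le
            (by positivity)
        · apply mul_le_mul _ hexp (abs_nonneg _) one_pos.le
          rw [div_le_one p2]; exact g2
  _ = δ * M * ((1 + η ^ 2) * Real.exp (-(1 / (1 + δ)) * η ^ 2)) := by ring

end Diff

lemma integrableOn_sq_exp {a : ℝ} (ha : 0 < a) :
    IntegrableOn (fun x : ℝ => x ^ 2 * Real.exp (-a * x ^ 2)) (Set.Ioi 0) := by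
  refine (integrableOn_rpow_mul_exp_neg_mul_sq ha (s := 2) (by norm_num)).congr_fun
    (fun x hx => ?_) measurableSet_Ioi
  beta_reduce
  rw [show ((2:ℝ) : ℝ) = ((2:ℕ) : ℝ) by norm_num, Real.rpow_natCast]

lemma integral_sq_exp_Ioi {a : ℝ} (ha : 0 < a) :
    ∫ x in Set.Ioi (0:ℝ), x ^ 2 * Real.exp (-a * x ^ 2) = Real.sqrt (π / a) / (4 * a) := by
  have hint2 := integrableOn_sq_exp ha
  have hint1 : IntegrableOn (fun x : ℝ => Real.exp (-a * x ^ 2)) (Ioi 0) :=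
    (integrable_exp_neg_mul_sq ha).integrableOn
  have hderiv : ∀ x ∈ Ioi (0:ℝ), HasDerivAt (fun x : ℝ => x * Real.exp (-a * x ^ 2))
      (Real.exp (-a * x ^ 2) - 2 * a * (x ^ 2 * Real.exp (-a * x ^ 2))) x := by
    intro x _
    have h1 : HasDerivAt (fun x : ℝ => -a * x ^ 2) (-a * (2 * x)) x := by
      simpa using ((hasDerivAt_pow 2 x).const_mul (-a))
    have := (hasDerivAt_id x).mul h1.exp
    refine this.congr_deriv ?_
    simp only [id]
    ring
  have hlim : Tendsto (fun x : ℝ => Real.exp (-(1/2) * x)) atTop (nhds 0) := by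
    apply Real.tendsto_exp_atBot.comp
    apply Tendsto.const_mul_atTop_of_neg (by norm_num : -(1/2 : ℝ) < 0) tendsto_id
  have htend : Tendsto (fun x : ℝ => x * Real.exp (-a * x ^ 2)) atTop (nhds 0) := by
    have h := (rpow_mul_exp_neg_mul_sq_isLittleO_exp_neg ha 1).tendsto_zero_of_tendsto hlim
    refine h.congr (fun x => ?_)
    rw [Real.rpow_one]
  have key := integral_Ioi_of_hasDerivAt_of_tendsto
    (f := fun x : ℝ => x * Real.exp (-a * x ^ 2)) (a := 0)
    ((continuous_id.mul (by fun_prop :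
      Continuous fun x : ℝ => Real.exp (-a*x^2))).continuousWithinAt) hderiv
    (hint1.sub (hint2.const_mul (2 * a))) htend
  rw [MeasureTheory.integral_sub hint1 (hint2.const_mul (2*a))] at key
  simp only [zero_mul, mul_zero, sub_zero] at key
  rw [integral_const_mul, integral_gaussian_Ioi] at key
  have h2a : (2*a) ≠ 0 := by positivity
  field_simp at key ⊢
  linarith

lemma Itot_diff {δ : ℝ} {h₁ h₂ : ℝ → ℝ} {M : ℝ} (hδ : 0 < δ) (hK₁ : MemK h₁)
    (hK₂ : MemK h₂) (hM : ∀ x ≥ 0, |h₁ x - h₂ x| ≤ M) (hM0 : 0 ≤ M) :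
    |Itot δ h₁ - Itot δ h₂|
      ≤ δ * M * (Real.sqrt π * Real.sqrt (1 + δ) * (3 + δ) / 4) := by
  have h1δ : (0:ℝ) < 1 + δ := by linarith
  have ha : (0:ℝ) < 1 / (1 + δ) := one_div_pos.2 h1δ
  have hint1 : IntegrableOn (fun x : ℝ => Real.exp (-(1 / (1 + δ)) * x ^ 2)) (Ioi 0) :=
    (integrable_exp_neg_mul_sq ha).integrableOn
  have hint2 := integrableOn_sq_exp ha
  have hg : IntegrableOn
      (fun x : ℝ => δ * M * ((1 + x ^ 2) * Real.exp (-(1 / (1 + δ)) * x ^ 2)))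
      (Ioi 0) := by
    have hii : IntegrableOn
        (fun x : ℝ => δ * M * (Real.exp (-(1 / (1 + δ)) * x ^ 2)
          + x ^ 2 * Real.exp (-(1 / (1 + δ)) * x ^ 2))) (Ioi 0) := by
      have := (hint1.add hint2).const_mul (δ * M)
      simpa [Pi.add_apply, mul_add, IntegrableOn] using this
    refine hii.congr_fun (fun x _ => ?_) measurableSet_Ioi
    ring
  have hF1 := F_integrable hδ hK₁
  have hF2 := F_integrable hδ hK₂
  rw [Itot, Itot, ← MeasureTheory.integral_sub hF1 hF2]
  calc |∫ x in Ioi (0:ℝ), (F δ h₁ x - F δ h₂ x)|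
      ≤ ∫ x in Ioi (0:ℝ), |F δ h₁ x - F δ h₂ x| := by
        simpa using MeasureTheory.norm_integral_le_integral_norm
          (μ := volume.restrict (Ioi 0)) (fun x => F δ h₁ x - F δ h₂ x)
  _ ≤ ∫ x in Ioi (0:ℝ), δ * M * ((1 + x ^ 2) * Real.exp (-(1 / (1 + δ)) * x ^ 2)) := by
        apply setIntegral_mono_on (hF1.sub hF2).abs hg measurableSet_Ioi
        exact fun x hx => F_diff_le hδ hK₁ hK₂ hM hM0 (le_of_lt hx)
  _ = δ * M * ((∫ x in Ioi (0:ℝ), Real.exp (-(1 / (1 + δ)) * x ^ 2))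
        + ∫ x in Ioi (0:ℝ), x ^ 2 * Real.exp (-(1 / (1 + δ)) * x ^ 2)) := by
        rw [integral_const_mul, ← MeasureTheory.integral_add hint1 hint2]
        congr 1
        apply setIntegral_congr_fun measurableSet_Ioi
        intro x _
        ring
  _ = δ * M * (Real.sqrt π * Real.sqrt (1 + δ) * (3 + δ) / 4) := by
        rw [integral_gaussian_Ioi, integral_sq_exp_Ioi ha]
        have hdiv : π / (1 / (1 + δ)) = π * (1 + δ) := by field_simp
        rw [hdiv, Real.sqrt_mul pi_pos.le]
        congr 1
        field_simp
        ring

theorem Ch_diff_bound (δ : ℝ) (hδ : 0 < δ)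
    (h₁ h₂ : ℝ → ℝ) (hK₁ : MemK h₁) (hK₂ : MemK h₂) :
    |Ch δ h₁ - Ch δ h₂| ≤
      1 / Real.sqrt π * δ * Real.sqrt (1 + δ) * (1 + δ) ^ 2 * (3 + δ) *
        supNorm (h₁ - h₂) := by
  have h1δ : (0:ℝ) < 1 + δ := by linarith
  set M := supNorm (h₁ - h₂) with hMdef
  have hbdd : BddAbove (Set.range fun x : Set.Ici (0:ℝ) => |(h₁ - h₂) (x : ℝ)|) := by
    refine ⟨2, Set.forall_mem_range.2 fun x => ?_⟩
    have b1 := hK₁.2.1 x x.2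
    have b2 := hK₂.2.1 x x.2
    rw [Pi.sub_apply]
    rw [abs_le]
    constructor <;> linarith [b1.1, b1.2, b2.1, b2.2]
  have hM : ∀ x ≥ (0:ℝ), |h₁ x - h₂ x| ≤ M := by
    intro x hx
    have := le_ciSup hbdd (⟨x, hx⟩ : Set.Ici (0:ℝ))
    simpa [hMdef, supNorm, Pi.sub_apply] using this
  have hM0 : 0 ≤ M := le_trans (abs_nonneg _) (hM 0 le_rfl)
  have hsπ : (0:ℝ) < Real.sqrt π := Real.sqrt_pos.2 pi_pos
  set L : ℝ := Real.sqrt π / (2 * (1 + δ)) with hL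
  have hLpos : 0 < L := by positivity
  have hI1 := Itot_ge hδ hK₁
  have hI2 := Itot_ge hδ hK₂
  have hI1pos : 0 < Itot δ h₁ := lt_of_lt_of_le hLpos hI1
  have hI2pos : 0 < Itot δ h₂ := lt_of_lt_of_le hLpos hI2
  have hD := Itot_diff hδ hK₁ hK₂ hM hM0
  have key : Ch δ h₁ - Ch δ h₂ = (Itot δ h₂ - Itot δ h₁) / (Itot δ h₁ * Itot δ h₂) := by
    unfold Ch
    field_simp
  rw [key, abs_div, abs_of_pos (mul_pos hI1pos hI2pos)]
  have hDnn : 0 ≤ δ * M * (Real.sqrt π * Real.sqrt (1 + δ) * (3 + δ) / 4) := by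
    have : (0:ℝ) ≤ Real.sqrt π * Real.sqrt (1 + δ) * (3 + δ) / 4 := by positivity
    exact mul_nonneg (mul_nonneg hδ.le hM0) this
  have step : |Itot δ h₂ - Itot δ h₁| / (Itot δ h₁ * Itot δ h₂)
      ≤ (δ * M * (Real.sqrt π * Real.sqrt (1 + δ) * (3 + δ) / 4)) / (L * L) := by
    apply div_le_div₀ hDnn _ (mul_pos hLpos hLpos) (mul_le_mul hI1 hI2 hLpos.le hI1pos.le)
    rw [abs_sub_comm]
    exact hD
  refine le_trans step (le_of_eq ?_)
  rw [hL]
  field_simp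
  ring_nf
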